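/- Let N be any dimension and let x ∈ ℝ^N with 0 < |x| < 1. Set ρ = 2/(1 − |x|²), d = log((1 + |x|)/(1 − |x|)), A = 1 + ρ|x|² − ρ|x|/d and B = ρ|x|/d. Then A ≥ 0, moreover d·ρ|x| − A ≥ ρ|x|² ≥ 0, and d·ρ|x|·B − (B² − 1) ≥ 0. -/

import Mathlib

private lemma mono_aux {f f' : ℝ → ℝ} {t : ℝ} (h0 : 0 < t) (h1 : t < 1)
    (hderiv : ∀ s ∈ Set.Ioo (-1:ℝ) 1, HasDerivAt f (f' s) s)
    (hnn : ∀ s ∈ Set.Ioo (-1:ℝ) 1, 0 ≤ f' s) : f 0 ≤ f t := by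
  have hsub : Set.Icc (0:ℝ) t ⊆ Set.Ioo (-1:ℝ) 1 := fun s hs =>
    ⟨by linarith [hs.1], by linarith [hs.2]⟩
  have hmono : MonotoneOn f (Set.Icc 0 t) := by
    apply monotoneOn_of_deriv_nonneg (convex_Icc 0 t)
    · exact fun s hs => (hderiv s (hsub hs)).continuousAt.continuousWithinAt
    · intro s hs
      rw [interior_Icc] at hs
      exact ((hderiv s (hsub (Set.Ioo_subset_Icc_self hs))).differentiableAt).differentiableWithinAt
    · intro s hs
      rw [interior_Icc] at hs
      have h := hsub (Set.Ioo_subset_Icc_self hs)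
      rw [(hderiv s h).deriv]
      exact hnn s h
  exact hmono (Set.left_mem_Icc.2 h0.le) (Set.right_mem_Icc.2 h0.le) h0.le

private lemma log_bounds {t : ℝ} (h0 : 0 < t) (h1 : t < 1) :
    2*t ≤ Real.log ((1+t)/(1-t)) ∧ Real.log ((1+t)/(1-t)) ≤ 2*t/(1-t^2) := by
  have hlogd : Real.log ((1+t)/(1-t)) = Real.log (1+t) - Real.log (1-t) :=
    Real.log_div (by positivity) (by linarith)
  -- derivative facts
  have key : ∀ s ∈ Set.Ioo (-1:ℝ) 1,
      HasDerivAt (fun s => Real.log (1+s) - Real.log (1-s)) (1/(1+s) + 1/(1-s)) s := by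
    intro s hs
    have h1p : (1:ℝ) + s ≠ 0 := by have := hs.1; intro h; linarith
    have h1m : (1:ℝ) - s ≠ 0 := by have := hs.2; intro h; linarith
    have hp : HasDerivAt (fun s : ℝ => 1 + s) 1 s := (hasDerivAt_id s).const_add 1
    have hq : HasDerivAt (fun s : ℝ => 1 - s) (-1) s := (hasDerivAt_id s).const_sub 1
    have := (hp.log h1p).sub (hq.log h1m)
    refine this.congr_deriv ?_
    ring
  constructor
  · -- lower bound: f s = log(1+s) - log(1-s) - 2 s is increasing
    have h := mono_aux (f := fun s => Real.log (1+s) - Real.log (1-s) - 2*s)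
      (f' := fun s => 1/(1+s) + 1/(1-s) - 2) h0 h1
      (fun s hs => ((key s hs).sub (((hasDerivAt_id s).const_mul 2).congr_deriv (by ring))))
      (by
        intro s hs
        have hp : (0:ℝ) < 1 + s := by linarith [hs.1]
        have hm : (0:ℝ) < 1 - s := by linarith [hs.2]
        have hs2 : s^2 < 1 := by nlinarith [hs.1, hs.2]
        rw [div_add_div _ _ (ne_of_gt hp) (ne_of_gt hm)]
        have h : (1*(1-s)+(1+s)*1) / ((1+s)*(1-s)) - 2 = (2*s^2)/((1+s)*(1-s)) := by
          field_simp; ring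
        rw [h]
        positivity)
    simp only [add_zero, sub_zero, Real.log_one, mul_zero] at h
    rw [hlogd]; linarith
  · -- upper bound: g s = 2s/(1-s²) - (log(1+s) - log(1-s)) is increasing
    have h := mono_aux (f := fun s => 2*s/(1-s^2) - (Real.log (1+s) - Real.log (1-s)))
      (f' := fun s => (2*(1-s^2) - 2*s*(-(2*s)))/(1-s^2)^2 - (1/(1+s) + 1/(1-s))) h0 h1
      (by
        intro s hs
        have hp : (0:ℝ) < 1 + s := by linarith [hs.1]
        have hm : (0:ℝ) < 1 - s := by linarith [hs.2]
        have hne : (1:ℝ) - s^2 ≠ 0 := by nlinarith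
        have hnum : HasDerivAt (fun s : ℝ => 2*s) 2 s :=
          ((hasDerivAt_id s).const_mul 2).congr_deriv (by ring)
        have hden : HasDerivAt (fun s : ℝ => 1 - s^2) (-(2*s)) s := by
          have := (hasDerivAt_pow 2 s).const_sub 1
          refine this.congr_deriv ?_; push_cast; norm_num
        exact (hnum.div hden hne).sub (key s hs))
      (by
        intro s hs
        have hp : (0:ℝ) < 1 + s := by linarith [hs.1]
        have hm : (0:ℝ) < 1 - s := by linarith [hs.2]
        have hps : (0:ℝ) < 1 - s^2 := by nlinarith
        rw [sub_nonneg]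
        rw [div_add_div _ _ (ne_of_gt hp) (ne_of_gt hm)]
        rw [div_le_div_iff₀ (by positivity) (by positivity)]
        nlinarith [sq_nonneg s, sq_nonneg (s^2), mul_pos hp hm])
    simp only [mul_zero, zero_div, sub_zero, add_zero, Real.log_one, zero_pow] at h
    rw [hlogd]
    have hps : (0:ℝ) < 1 - t^2 := by nlinarith
    norm_num at h
    linarith

/-- positivity of the Pohozaev quantities `A` and `B`. -/
theorem pohozaev_quantities (N : ℕ) (x : EuclideanSpace ℝ (Fin N))
    (hx0 : 0 < ‖x‖) (hx1 : ‖x‖ < 1) (ρ d A B : ℝ)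
    (hρ : ρ = 2 / (1 - ‖x‖ ^ 2))
    (hd : d = Real.log ((1 + ‖x‖) / (1 - ‖x‖)))
    (hA : A = 1 + ρ * ‖x‖ ^ 2 - ρ * ‖x‖ / d)
    (hB : B = ρ * ‖x‖ / d) :
    0 ≤ A ∧ ρ * ‖x‖ ^ 2 ≤ d * (ρ * ‖x‖) - A ∧ 0 ≤ ρ * ‖x‖ ^ 2 ∧
      0 ≤ d * (ρ * ‖x‖) * B - (B ^ 2 - 1) := by
  set t := ‖x‖ with ht
  obtain ⟨hdl, hdu⟩ := log_bounds hx0 hx1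
  rw [← hd] at hdl hdu
  have hps : (0:ℝ) < 1 - t^2 := by nlinarith
  have hρpos : 0 < ρ := by rw [hρ]; positivity
  have hdpos : 0 < d := lt_of_lt_of_le (by linarith) hdl
  have hu : ρ * t = 2*t/(1-t^2) := by rw [hρ]; field_simp
  have hdu' : d ≤ ρ * t := by rw [hu]; exact hdu
  have hut : ρ * t ^ 2 = (ρ * t) * t := by ring
  -- A ≥ 0 : ρ t ≤ d (1 + ρ t²)
  have hA0 : 0 ≤ A := by
    rw [hA, sub_nonneg, div_le_iff₀ hdpos]
    have h1 : ρ * t ≤ 2*t * (1 + ρ * t^2) := by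
      rw [hu, hρ]
      rw [div_le_iff₀ hps] at *
      field_simp
      nlinarith [sq_nonneg t, hx0]
    calc ρ * t ≤ 2*t * (1 + ρ * t^2) := h1
      _ ≤ (1 + ρ * t^2) * d := by
          rw [mul_comm]
          apply mul_le_mul_of_nonneg_left hdl
          nlinarith
  refine ⟨hA0, ?_, by positivity, ?_⟩
  · -- d ρ t - A ≥ ρ t²
    rw [hA]
    have h1 : 2 * (ρ * t^2) ≤ d * (ρ * t) := by
      have : 2 * (ρ * t^2) = (2*t) * (ρ * t) := by ring
      rw [this]
      exact mul_le_mul_of_nonneg_right hdl (by positivity)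
    have h2 : (1:ℝ) ≤ ρ * t / d := (one_le_div hdpos).2 hdu'
    linarith
  · -- u² - (u/d)² + 1 ≥ 0 where u = ρ t
    rw [hB]
    have hBle : ρ * t / d ≤ 1 / (1 - t^2) := by
      rw [div_le_div_iff₀ hdpos hps]
      have h2t : ρ * t * (1 - t^2) = 2 * t := by rw [hu]; field_simp
      rw [h2t]; linarith
    have hBpos : 0 < ρ * t / d := by positivity
    have key : (ρ * t / d)^2 ≤ (ρ * t)^2 + 1 := by
      have h1 : (ρ * t / d)^2 ≤ (1/(1-t^2))^2 := by
        apply pow_le_pow_left₀ hBpos.le hBle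
      have h2 : (1/(1-t^2))^2 ≤ (ρ*t)^2 + 1 := by
        rw [hu, div_pow, div_pow, div_le_iff₀ (by positivity), one_pow]
        have : ((2*t)^2 / (1-t^2)^2 + 1) * (1-t^2)^2 = (2*t)^2 + (1-t^2)^2 := by
          field_simp
        rw [this]
        nlinarith [sq_nonneg t, sq_nonneg (t^2)]
      linarith
    have : d * (ρ * t) * (ρ * t / d) = (ρ * t)^2 := by
      field_simp
    rw [this]
    linarith
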